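/- arXiv:1803.06752 — 5 statements merged into one kernel-verified Lean document; each statement's English description precedes it below -/
import Mathlib

section
/- (Bekić principle) Let D and E be complete lattices and let F : D × E → D and G : D × E → E be monotone functions. Then the least fixpoint of the monotone map ⟨F,G⟩ : D × E → D × E equals the pair (f̂, ĝ) where f̂ = μf. F(f, μg. G(f, g)) and ĝ = μg. G(μf. F(f, g), g); here μx. H(x) denotes the least fixpoint of the monotone function x ↦ H(x). -/
/-- The least fixpoint (by Knaster–Tarski, `sInf {x | f x ≤ x}`) of a monotone map. -/
def lfpOf {L : Type*} [CompleteLattice L] (f : L → L) : L := sInf {x | f x ≤ x}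

theorem lfpOf_le {L : Type*} [CompleteLattice L] {f : L → L} {x : L}
    (hx : f x ≤ x) : lfpOf f ≤ x := sInf_le hx

theorem lfpOf_fixed {L : Type*} [CompleteLattice L] {f : L → L}
    (hf : Monotone f) : f (lfpOf f) = lfpOf f := by
  have h1 : f (lfpOf f) ≤ lfpOf f :=
    le_sInf fun x hx => le_trans (hf (sInf_le hx)) hx
  exact le_antisymm h1 (lfpOf_le (hf h1))

/-- (Bekić principle) For complete lattices `D`, `E` and monotone `F : D × E → D`,
`G : D × E → E`, the least fixpoint of `⟨F, G⟩ : D × E → D × E` is the pair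
`(f̂, ĝ)` with `f̂ = μf. F(f, μg. G(f,g))` and `ĝ = μg. G(μf. F(f,g), g)`. -/
theorem bekic {D E : Type*} [CompleteLattice D] [CompleteLattice E]
    (F : D × E → D) (G : D × E → E) (hF : Monotone F) (hG : Monotone G) :
    lfpOf (fun p : D × E => (F p, G p)) =
      (lfpOf (fun f : D => F (f, lfpOf (fun g : E => G (f, g)))),
       lfpOf (fun g : E => G (lfpOf (fun f : D => F (f, g)), g))) := by
  set gs : D → E := fun f => lfpOf (fun g : E => G (f, g)) with hgs
  set fs : E → D := fun g => lfpOf (fun f : D => F (f, g)) with hfs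
  set fh : D := lfpOf (fun f : D => F (f, gs f)) with hfh
  set gh : E := lfpOf (fun g : E => G (fs g, g)) with hgh
  have monG : ∀ f : D, Monotone (fun g : E => G (f, g)) :=
    fun f _ _ h => hG (Prod.mk_le_mk.mpr ⟨le_rfl, h⟩)
  have monF : ∀ g : E, Monotone (fun f : D => F (f, g)) :=
    fun g _ _ h => hF (Prod.mk_le_mk.mpr ⟨h, le_rfl⟩)
  have gs_fix : ∀ f : D, G (f, gs f) = gs f := fun f => lfpOf_fixed (monG f)
  have fs_fix : ∀ g : E, F (fs g, g) = fs g := fun g => lfpOf_fixed (monF g)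
  have gs_mono : Monotone gs := fun a b h =>
    lfpOf_le (le_of_le_of_eq (hG (Prod.mk_le_mk.mpr ⟨h, le_rfl⟩)) (gs_fix b))
  have fs_mono : Monotone fs := fun a b h =>
    lfpOf_le (le_of_le_of_eq (hF (Prod.mk_le_mk.mpr ⟨le_rfl, h⟩)) (fs_fix b))
  have fh_fix : F (fh, gs fh) = fh :=
    lfpOf_fixed (fun a b h => hF (Prod.mk_le_mk.mpr ⟨h, gs_mono h⟩))
  have gh_fix : G (fs gh, gh) = gh :=
    lfpOf_fixed (fun a b h => hG (Prod.mk_le_mk.mpr ⟨fs_mono h, h⟩))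
  -- fh ≤ fs gh
  have h1 : fh ≤ fs gh := by
    apply lfpOf_le
    have hgsfs : gs (fs gh) ≤ gh := lfpOf_le (le_of_eq gh_fix)
    calc F (fs gh, gs (fs gh)) ≤ F (fs gh, gh) :=
          hF (Prod.mk_le_mk.mpr ⟨le_rfl, hgsfs⟩)
      _ = fs gh := fs_fix gh
  -- gh = gs fh
  have hfsle : fs (gs fh) ≤ fh := lfpOf_le (le_of_eq fh_fix)
  have hA : gh ≤ gs fh := by
    apply lfpOf_le
    calc G (fs (gs fh), gs fh) ≤ G (fh, gs fh) :=
          hG (Prod.mk_le_mk.mpr ⟨hfsle, le_rfl⟩)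
      _ = gs fh := gs_fix fh
  have hB : gs fh ≤ gh := by
    apply lfpOf_le
    calc G (fh, gh) ≤ G (fs gh, gh) := hG (Prod.mk_le_mk.mpr ⟨h1, le_rfl⟩)
      _ = gh := gh_fix
  have hgh_eq : gh = gs fh := le_antisymm hA hB
  -- (fh, gh) is a fixpoint of the pair map
  have hFfix : F (fh, gh) = fh := by rw [hgh_eq]; exact fh_fix
  have hGfix : G (fh, gh) = gh := by rw [hgh_eq]; exact gs_fix fh
  -- antisymmetry
  set p : D × E := lfpOf (fun p : D × E => (F p, G p)) with hp
  have p_fix : (F p, G p) = p := lfpOf_fixed (fun a b h => Prod.mk_le_mk.mpr ⟨hF h, hG h⟩)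
  have hp1 : F p = p.1 := congrArg Prod.fst p_fix
  have hp2 : G p = p.2 := congrArg Prod.snd p_fix
  have hgp : gs p.1 ≤ p.2 := lfpOf_le (le_of_eq (by rw [Prod.mk.eta, hp2]))
  have hfp : fs p.2 ≤ p.1 := lfpOf_le (le_of_eq (by rw [Prod.mk.eta, hp1]))
  have hle1 : fh ≤ p.1 := by
    apply lfpOf_le
    calc F (p.1, gs p.1) ≤ F (p.1, p.2) := hF (Prod.mk_le_mk.mpr ⟨le_rfl, hgp⟩)
      _ = p.1 := by rw [Prod.mk.eta, hp1]
  have hle2 : gh ≤ p.2 := by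
    apply lfpOf_le
    calc G (fs p.2, p.2) ≤ G (p.1, p.2) := hG (Prod.mk_le_mk.mpr ⟨hfp, le_rfl⟩)
      _ = p.2 := by rw [Prod.mk.eta, hp2]
  have hge : p ≤ (fh, gh) := lfpOf_le (by
    rw [hFfix, hGfix])
  exact le_antisymm hge (Prod.mk_le_mk.mpr ⟨hle1, hle2⟩)
end

section
/- A subset A ⊆ ℚ is fixed setwise by every order-automorphism of ℚ fixing a finite set S pointwise if and only if A is a union of S-orbits, i.e., a union of some of the singletons {s} (s ∈ S) and some of the connected components of ℚ \ S. Consequently, every finitely supported subset of ℚ (over ordered atoms) is a finite union of open intervals and single points. -/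
/-- The `S`-orbit of a rational `a` under the group of order-automorphisms of `ℚ`
fixing the finite set `S` pointwise. -/
def qOrbit (S : Finset ℚ) (a : ℚ) : Set ℚ :=
  {b | ∃ π : ℚ ≃o ℚ, (∀ s ∈ S, π s = s) ∧ π a = b}

/-- A piecewise-linear increasing bijection of `ℚ` fixing `(-∞, l]` and `[r, ∞)`,
mapping `a` to `b` (when `l < a, b < r`). -/
noncomputable def pwFun (l r a b x : ℚ) : ℚ :=
  if x ≤ l ∨ r ≤ x then x
  else if x ≤ a then l + (x - l) * ((b - l) / (a - l))
  else r + (x - r) * ((r - b) / (r - a))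

section pw

variable {l r a b : ℚ} (hla : l < a) (har : a < r) (hlb : l < b) (hbr : b < r)

lemma pw_left {x : ℚ} (hx : x ≤ l) : pwFun l r a b x = x := by
  simp [pwFun, hx]

lemma pw_right {x : ℚ} (hx : r ≤ x) : pwFun l r a b x = x := by
  simp [pwFun, hx]

include hla har hlb hbr

lemma pw_mid1 {x : ℚ} (h1 : l < x) (h2 : x ≤ a) :
    pwFun l r a b x = l + (x - l) * ((b - l) / (a - l)) ∧
      l < pwFun l r a b x ∧ pwFun l r a b x ≤ b := by
  have hcond : ¬ (x ≤ l ∨ r ≤ x) := by push_neg; exact ⟨h1, lt_of_le_of_lt h2 har⟩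
  have heq : pwFun l r a b x = l + (x - l) * ((b - l) / (a - l)) := by
    simp [pwFun, hcond, h2]
  have hk : (0:ℚ) < (b - l) / (a - l) := div_pos (by linarith) (by linarith)
  have hk2 : (a - l) * ((b - l) / (a - l)) = b - l :=
    mul_div_cancel₀ _ (by linarith : a - l ≠ 0)
  refine ⟨heq, ?_, ?_⟩
  · rw [heq]; nlinarith
  · rw [heq]; nlinarith

lemma pw_mid2 {x : ℚ} (h1 : a < x) (h2 : x < r) :
    pwFun l r a b x = r + (x - r) * ((r - b) / (r - a)) ∧
      b < pwFun l r a b x ∧ pwFun l r a b x < r := by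
  have hcond : ¬ (x ≤ l ∨ r ≤ x) := by push_neg; exact ⟨lt_trans hla h1, h2⟩
  have heq : pwFun l r a b x = r + (x - r) * ((r - b) / (r - a)) := by
    simp [pwFun, hcond, not_le.2 h1]
  have hk : (0:ℚ) < (r - b) / (r - a) := div_pos (by linarith) (by linarith)
  have hk2 : (r - a) * ((r - b) / (r - a)) = r - b :=
    mul_div_cancel₀ _ (by linarith : r - a ≠ 0)
  refine ⟨heq, ?_, ?_⟩
  · rw [heq]; nlinarith
  · rw [heq]; nlinarith

lemma pw_a : pwFun l r a b a = b := by
  have h := (pw_mid1 hla har hlb hbr hla le_rfl).1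
  rw [h]
  have : (a - l) * ((b - l) / (a - l)) = b - l :=
    mul_div_cancel₀ _ (by linarith : a - l ≠ 0)
  linarith

lemma pw_strictMono : StrictMono (pwFun l r a b) := by
  intro x y hxy
  rcases le_or_gt x l with hx1 | hx1
  · rw [pw_left hx1]
    rcases le_or_gt y l with hy1 | hy1
    · rw [pw_left hy1]; exact hxy
    rcases le_or_gt y a with hy2 | hy2
    · have := pw_mid1 hla har hlb hbr hy1 hy2
      linarith [this.2.1]
    rcases lt_or_ge y r with hy3 | hy3
    · have := pw_mid2 hla har hlb hbr hy2 hy3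
      linarith [this.2.1]
    · rw [pw_right hy3]; exact hxy
  rcases le_or_gt x a with hx2 | hx2
  · have Hx := pw_mid1 hla har hlb hbr hx1 hx2
    rcases le_or_gt y a with hy2 | hy2
    · have Hy := pw_mid1 hla har hlb hbr (lt_trans hx1 hxy) hy2
      rw [Hx.1, Hy.1]
      have hk : (0:ℚ) < (b - l) / (a - l) := div_pos (by linarith) (by linarith)
      nlinarith
    rcases lt_or_ge y r with hy3 | hy3
    · have Hy := pw_mid2 hla har hlb hbr hy2 hy3
      linarith [Hx.2.2, Hy.2.1]
    · rw [pw_right hy3]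
      linarith [Hx.2.2]
  rcases lt_or_ge x r with hx3 | hx3
  · have Hx := pw_mid2 hla har hlb hbr hx2 hx3
    rcases lt_or_ge y r with hy3 | hy3
    · have Hy := pw_mid2 hla har hlb hbr (lt_trans hx2 hxy) hy3
      rw [Hx.1, Hy.1]
      have hk : (0:ℚ) < (r - b) / (r - a) := div_pos (by linarith) (by linarith)
      nlinarith
    · rw [pw_right hy3]
      linarith [Hx.2.2]
  · rw [pw_right hx3, pw_right (by linarith : r ≤ y)]
    exact hxy

lemma pw_comp (x : ℚ) : pwFun l r b a (pwFun l r a b x) = x := by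
  rcases le_or_gt x l with hx1 | hx1
  · rw [pw_left hx1, pw_left hx1]
  rcases le_or_gt x a with hx2 | hx2
  · have Hx := pw_mid1 hla har hlb hbr hx1 hx2
    have Hy := pw_mid1 hlb hbr hla har Hx.2.1 Hx.2.2
    rw [Hy.1, Hx.1]
    have h1 : a - l ≠ 0 := by linarith
    have h2 : b - l ≠ 0 := by linarith
    field_simp
    ring
  rcases lt_or_ge x r with hx3 | hx3
  · have Hx := pw_mid2 hla har hlb hbr hx2 hx3
    have Hy := pw_mid2 hlb hbr hla har Hx.2.1 Hx.2.2
    rw [Hy.1, Hx.1]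
    have h1 : r - a ≠ 0 := by linarith
    have h2 : r - b ≠ 0 := by linarith
    field_simp
    ring
  · rw [pw_right hx3, pw_right hx3]

/-- The piecewise-linear order automorphism. -/
noncomputable def pwIso : ℚ ≃o ℚ :=
  StrictMono.orderIsoOfSurjective (pwFun l r a b) (pw_strictMono hla har hlb hbr)
    (fun y => ⟨pwFun l r b a y, pw_comp hlb hbr hla har y⟩)

lemma pwIso_apply (x : ℚ) : pwIso hla har hlb hbr x = pwFun l r a b x := rfl

end pw

/-- Moving `a` to `b` (with `a < b`) by an automorphism fixing all of `T`, provided no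
element of `T` lies in `[a, b]`. -/
lemma exists_iso_move (T : Finset ℚ) (a b : ℚ) (hab : a < b)
    (h : ∀ s ∈ T, s < a ∨ b < s) :
    ∃ π : ℚ ≃o ℚ, (∀ s ∈ T, π s = s) ∧ π a = b := by
  classical
  set L : Finset ℚ := insert (a - 1) (T.filter (fun s => s < a)) with hL
  set R : Finset ℚ := insert (b + 1) (T.filter (fun s => b < s)) with hR
  have hLne : L.Nonempty := ⟨a - 1, Finset.mem_insert_self _ _⟩
  have hRne : R.Nonempty := ⟨b + 1, Finset.mem_insert_self _ _⟩
  set l := L.max' hLne with hl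
  set r := R.min' hRne with hr
  have hla : l < a := by
    apply Finset.max'_lt_iff L hLne |>.2
    intro y hy
    rcases Finset.mem_insert.1 hy with h1 | h1
    · linarith
    · exact (Finset.mem_filter.1 h1).2
  have hbr : b < r := by
    apply Finset.lt_min'_iff R hRne |>.2
    intro y hy
    rcases Finset.mem_insert.1 hy with h1 | h1
    · linarith
    · exact (Finset.mem_filter.1 h1).2
  have hlb : l < b := lt_trans hla hab
  have har : a < r := lt_trans hab hbr
  refine ⟨pwIso hla har hlb hbr, ?_, ?_⟩
  · intro s hs
    rcases h s hs with h1 | h1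
    · have hsl : s ≤ l := Finset.le_max' L s (Finset.mem_insert_of_mem (Finset.mem_filter.2 ⟨hs, h1⟩))
      rw [pwIso_apply, pw_left hsl]
    · have hsr : r ≤ s := Finset.min'_le R s (Finset.mem_insert_of_mem (Finset.mem_filter.2 ⟨hs, h1⟩))
      rw [pwIso_apply, pw_right hsr]
  · rw [pwIso_apply, pw_a hla har hlb hbr]

/-- Moving `a` to `b` by an automorphism fixing all of `T`, general version. -/
lemma exists_iso_move' (T : Finset ℚ) (a b : ℚ)
    (h : ∀ s ∈ T, s < min a b ∨ max a b < s) :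
    ∃ π : ℚ ≃o ℚ, (∀ s ∈ T, π s = s) ∧ π a = b := by
  rcases lt_trichotomy a b with hab | hab | hab
  · apply exists_iso_move T a b hab
    intro s hs
    rcases h s hs with h1 | h1
    · exact Or.inl (lt_of_lt_of_le h1 (min_le_left a b))
    · exact Or.inr (lt_of_le_of_lt (le_max_right a b) h1)
  · exact ⟨OrderIso.refl ℚ, fun s _ => rfl, hab⟩
  · obtain ⟨π, hπ, hπb⟩ := exists_iso_move T b a hab (fun s hs => by
      rcases h s hs with h1 | h1
      · exact Or.inl (lt_of_lt_of_le h1 (min_le_right a b))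
      · exact Or.inr (lt_of_le_of_lt (le_max_left a b) h1))
    refine ⟨π.symm, fun s hs => ?_, ?_⟩
    · have := hπ s hs
      conv_lhs => rw [← this]
      exact π.symm_apply_apply s
    · rw [← hπb]
      exact π.symm_apply_apply b

/-- Part 1 of the theorem, as a standalone lemma. -/
lemma part1 (S : Finset ℚ) (A : Set ℚ) :
    (∀ π : ℚ ≃o ℚ, (∀ s ∈ S, π s = s) → ⇑π '' A = A) ↔
      (∀ a ∈ A, qOrbit S a ⊆ A) := by
  constructor
  · intro h a ha b hb
    obtain ⟨π, hπ, hπa⟩ := hb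
    rw [← h π hπ]
    exact ⟨a, ha, hπa⟩
  · intro h π hπ
    ext b
    constructor
    · rintro ⟨a, ha, rfl⟩
      exact h a ha ⟨π, hπ, rfl⟩
    · intro hb
      have hsymm : ∀ s ∈ S, π.symm s = s := by
        intro s hs
        conv_lhs => rw [← hπ s hs]
        exact π.symm_apply_apply s
      have : π.symm b ∈ A := h b hb ⟨π.symm, hsymm, rfl⟩
      exact ⟨π.symm b, this, π.apply_symm_apply b⟩

/-- Each point lies in a candidate interval contained in its orbit. -/
lemma key_lemma (T : Finset ℚ) (a : ℚ) :
    ∃ B : Set ℚ, a ∈ B ∧ B ⊆ qOrbit T a ∧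
      ((∃ s ∈ T, ∃ t ∈ T, B = Set.Ioo s t) ∨ (∃ s ∈ T, B = Set.Ioi s) ∨
        (∃ s ∈ T, B = Set.Iio s) ∨ B = Set.univ ∨ (∃ s ∈ T, B = {s})) := by
  classical
  by_cases haT : a ∈ T
  · refine ⟨{a}, rfl, ?_, Or.inr (Or.inr (Or.inr (Or.inr ⟨a, haT, rfl⟩)))⟩
    rintro b rfl
    exact ⟨OrderIso.refl ℚ, fun s _ => rfl, rfl⟩
  · set L : Finset ℚ := T.filter (fun s => s < a) with hL
    set R : Finset ℚ := T.filter (fun s => a < s) with hR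
    have hmem : ∀ s ∈ T, s ∈ L ∨ s ∈ R := by
      intro s hs
      rcases lt_trichotomy s a with h1 | h1 | h1
      · exact Or.inl (Finset.mem_filter.2 ⟨hs, h1⟩)
      · exact absurd (h1 ▸ hs) haT
      · exact Or.inr (Finset.mem_filter.2 ⟨hs, h1⟩)
    -- the move argument, shared by all four cases
    have move : ∀ b : ℚ, (∀ s ∈ L, s < b) → (∀ s ∈ R, b < s) → b ∈ qOrbit T a := by
      intro b hbL hbR
      apply exists_iso_move' T a b
      intro s hs
      rcases hmem s hs with h1 | h1
      · refine Or.inl (lt_min (Finset.mem_filter.1 h1).2 (hbL s h1))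
      · exact Or.inr (max_lt (Finset.mem_filter.1 h1).2 (hbR s h1))
    by_cases hLne : L.Nonempty
    · by_cases hRne : R.Nonempty
      · refine ⟨Set.Ioo (L.max' hLne) (R.min' hRne), ?_, ?_, ?_⟩
        · exact ⟨(Finset.max'_lt_iff L hLne).2 (fun y hy => (Finset.mem_filter.1 hy).2),
            (Finset.lt_min'_iff R hRne).2 (fun y hy => (Finset.mem_filter.1 hy).2)⟩
        · intro b hb
          exact move b (fun s hs => lt_of_le_of_lt (Finset.le_max' L s hs) hb.1)
            (fun s hs => lt_of_lt_of_le hb.2 (Finset.min'_le R s hs))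
        · exact Or.inl ⟨L.max' hLne, (Finset.mem_filter.1 (L.max'_mem hLne)).1,
            R.min' hRne, (Finset.mem_filter.1 (R.min'_mem hRne)).1, rfl⟩
      · refine ⟨Set.Ioi (L.max' hLne), ?_, ?_, ?_⟩
        · exact (Finset.max'_lt_iff L hLne).2 (fun y hy => (Finset.mem_filter.1 hy).2)
        · intro b hb
          exact move b (fun s hs => lt_of_le_of_lt (Finset.le_max' L s hs) hb)
            (fun s hs => absurd ⟨s, hs⟩ hRne)
        · exact Or.inr (Or.inl ⟨L.max' hLne, (Finset.mem_filter.1 (L.max'_mem hLne)).1, rfl⟩)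
    · by_cases hRne : R.Nonempty
      · refine ⟨Set.Iio (R.min' hRne), ?_, ?_, ?_⟩
        · exact (Finset.lt_min'_iff R hRne).2 (fun y hy => (Finset.mem_filter.1 hy).2)
        · intro b hb
          exact move b (fun s hs => absurd ⟨s, hs⟩ hLne)
            (fun s hs => lt_of_lt_of_le hb (Finset.min'_le R s hs))
        · exact Or.inr (Or.inr (Or.inl ⟨R.min' hRne, (Finset.mem_filter.1 (R.min'_mem hRne)).1, rfl⟩))
      · refine ⟨Set.univ, trivial, ?_, Or.inr (Or.inr (Or.inr (Or.inl rfl)))⟩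
        intro b _
        exact move b (fun s hs => absurd ⟨s, hs⟩ hLne) (fun s hs => absurd ⟨s, hs⟩ hRne)

/-- A subset `A ⊆ ℚ` is fixed setwise by every order-automorphism of `ℚ` fixing a
finite set `S` pointwise iff `A` is a union of `S`-orbits. Consequently, every
finitely supported subset of `ℚ` is a finite union of open intervals
(possibly unbounded) and single points. -/
theorem finitelySupported_subsets_of_Q (S : Finset ℚ) :
    (∀ A : Set ℚ,
      (∀ π : ℚ ≃o ℚ, (∀ s ∈ S, π s = s) → ⇑π '' A = A) ↔
      (∀ a ∈ A, qOrbit S a ⊆ A)) ∧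
    (∀ A : Set ℚ,
      (∃ T : Finset ℚ, ∀ π : ℚ ≃o ℚ, (∀ s ∈ T, π s = s) → ⇑π '' A = A) →
      ∃ F : Finset (Set ℚ),
        (∀ B ∈ F, (∃ a b : ℚ, B = Set.Ioo a b) ∨ (∃ a : ℚ, B = Set.Ioi a) ∨
          (∃ a : ℚ, B = Set.Iio a) ∨ B = Set.univ ∨ (∃ a : ℚ, B = {a})) ∧
        A = ⋃₀ ↑F) := by
  classical
  refine ⟨fun A => part1 S A, ?_⟩
  rintro A ⟨T, hT⟩
  have horb : ∀ a ∈ A, qOrbit T a ⊆ A := (part1 T A).1 hT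
  set F₀ : Finset (Set ℚ) :=
    ((T ×ˢ T).image fun p => Set.Ioo p.1 p.2) ∪ T.image Set.Ioi ∪ T.image Set.Iio ∪
      {Set.univ} ∪ T.image (fun s => ({s} : Set ℚ)) with hF₀
  refine ⟨F₀.filter (fun B => B ⊆ A), ?_, ?_⟩
  · intro B hB
    have hB0 : B ∈ F₀ := (Finset.mem_filter.1 hB).1
    simp only [hF₀, Finset.mem_union, Finset.mem_image, Finset.mem_product,
      Finset.mem_singleton] at hB0
    rcases hB0 with ((((⟨p, _, hp⟩ | ⟨s, _, hs⟩) | ⟨s, _, hs⟩) | h) | ⟨s, _, hs⟩)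
    · exact Or.inl ⟨p.1, p.2, hp.symm⟩
    · exact Or.inr (Or.inl ⟨s, hs.symm⟩)
    · exact Or.inr (Or.inr (Or.inl ⟨s, hs.symm⟩))
    · exact Or.inr (Or.inr (Or.inr (Or.inl h)))
    · exact Or.inr (Or.inr (Or.inr (Or.inr ⟨s, hs.symm⟩)))
  · ext x
    simp only [Set.mem_sUnion, Finset.coe_filter, Set.mem_setOf_eq]
    constructor
    · intro hx
      obtain ⟨B, hxB, hBorb, hshape⟩ := key_lemma T x
      have hBA : B ⊆ A := hBorb.trans (horb x hx)
      have hBF : B ∈ F₀ := by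
        simp only [hF₀, Finset.mem_union, Finset.mem_image, Finset.mem_product,
          Finset.mem_singleton]
        rcases hshape with ⟨s, hsT, t, htT, rfl⟩ | ⟨s, hsT, rfl⟩ | ⟨s, hsT, rfl⟩ | rfl |
          ⟨s, hsT, rfl⟩
        · exact Or.inl (Or.inl (Or.inl (Or.inl ⟨(s, t), ⟨hsT, htT⟩, rfl⟩)))
        · exact Or.inl (Or.inl (Or.inl (Or.inr ⟨s, hsT, rfl⟩)))
        · exact Or.inl (Or.inl (Or.inr ⟨s, hsT, rfl⟩))
        · exact Or.inl (Or.inr rfl)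
        · exact Or.inr ⟨s, hsT, rfl⟩
      exact ⟨B, ⟨hBF, hBA⟩, hxB⟩
    · rintro ⟨B, ⟨_, hBA⟩, hxB⟩
      exact hBA hxB
end

section
/- Over ordered atoms, every infinite finitely supported subset of ℚ contains an open interval; in particular, every infinite finitely supported subset of ℚ contains a strictly increasing infinite sequence. -/
/-- Piecewise linear map of `ℚ`: identity outside `(c,d)`, maps `x` to `y` inside. -/
def pwl (c d x y z : ℚ) : ℚ :=
  if z ≤ c then z
  else if z ≤ x then c + (z - c) * ((y - c) / (x - c))
  else if z < d then d - (d - z) * ((d - y) / (d - x))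
  else z

lemma pwl_eq1 {c d x y z : ℚ} (h : z ≤ c) : pwl c d x y z = z := if_pos h

lemma pwl_eq2 {c d x y z : ℚ} (h1 : c < z) (h2 : z ≤ x) :
    pwl c d x y z = c + (z - c) * ((y - c) / (x - c)) := by
  unfold pwl; rw [if_neg (not_le.2 h1), if_pos h2]

lemma pwl_eq3 {c d x y z : ℚ} (hcx : c < x) (h1 : x < z) (h2 : z < d) :
    pwl c d x y z = d - (d - z) * ((d - y) / (d - x)) := by
  unfold pwl
  rw [if_neg (not_le.2 (lt_trans hcx h1)), if_neg (not_le.2 h1), if_pos h2]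

lemma pwl_eq4 {c d x y z : ℚ} (hcx : c < x) (hxd : x < d) (h : d ≤ z) : pwl c d x y z = z := by
  unfold pwl
  rw [if_neg (not_le.2 (lt_of_lt_of_le (lt_trans hcx hxd) h)),
    if_neg (not_le.2 (lt_of_lt_of_le hxd h)), if_neg (not_lt.2 h)]

lemma pwl_bound2 {c d x y z : ℚ} (hcx : c < x) (hcy : c < y) (h1 : c < z) (h2 : z ≤ x) :
    c < pwl c d x y z ∧ pwl c d x y z ≤ y := by
  rw [pwl_eq2 h1 h2]
  have hxc : (0:ℚ) < x - c := by linarith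
  have hmul : (y - c) / (x - c) * (x - c) = y - c := div_mul_cancel₀ _ (by linarith)
  have hs : (0:ℚ) < (y - c) / (x - c) := div_pos (by linarith) hxc
  constructor
  · nlinarith
  · nlinarith

lemma pwl_bound3 {c d x y z : ℚ} (hcx : c < x) (hxd : x < d) (hyd : y < d)
    (h1 : x < z) (h2 : z < d) :
    y < pwl c d x y z ∧ pwl c d x y z < d := by
  rw [pwl_eq3 hcx h1 h2]
  have hdx : (0:ℚ) < d - x := by linarith
  have hmul : (d - y) / (d - x) * (d - x) = d - y := div_mul_cancel₀ _ (by linarith)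
  have hs : (0:ℚ) < (d - y) / (d - x) := div_pos (by linarith) hdx
  constructor
  · nlinarith
  · nlinarith

lemma pwl_strictMono {c d x y : ℚ} (hcx : c < x) (hxd : x < d) (hcy : c < y) (hyd : y < d) :
    StrictMono (pwl c d x y) := by
  have hs2 : (0:ℚ) < (y - c) / (x - c) := div_pos (by linarith) (by linarith)
  have hs3 : (0:ℚ) < (d - y) / (d - x) := div_pos (by linarith) (by linarith)
  intro z1 z2 h
  rcases le_or_gt z1 c with r1 | r1
  · rw [pwl_eq1 r1]
    rcases le_or_gt z2 c with s1 | s1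
    · rw [pwl_eq1 s1]; exact h
    · rcases le_or_gt z2 x with s2 | s2
      · exact lt_of_le_of_lt r1 (pwl_bound2 hcx hcy s1 s2).1
      · rcases lt_or_ge z2 d with s3 | s3
        · exact lt_of_le_of_lt (le_trans r1 (le_of_lt hcy))
            (pwl_bound3 hcx hxd hyd s2 s3).1
        · rw [pwl_eq4 hcx hxd s3]; exact h
  · rcases le_or_gt z1 x with r2 | r2
    · have b1 := pwl_bound2 (d := d) (y := y) hcx hcy r1 r2
      rcases le_or_gt z2 x with s2 | s2
      · rw [pwl_eq2 r1 r2, pwl_eq2 (lt_trans r1 h) s2]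
        have : (z1 - c) * ((y - c) / (x - c)) < (z2 - c) * ((y - c) / (x - c)) :=
          mul_lt_mul_of_pos_right (by linarith) hs2
        linarith
      · rcases lt_or_ge z2 d with s3 | s3
        · exact lt_of_le_of_lt b1.2 (pwl_bound3 hcx hxd hyd s2 s3).1
        · rw [pwl_eq4 hcx hxd s3]
          have : y < z2 := lt_of_lt_of_le hyd s3
          linarith [b1.2]
    · rcases lt_or_ge z1 d with r3 | r3
      · have b1 := pwl_bound3 hcx hxd hyd r2 r3
        rcases lt_or_ge z2 d with s3 | s3
        · rw [pwl_eq3 hcx r2 r3, pwl_eq3 hcx (lt_trans r2 h) s3]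
          have : (d - z2) * ((d - y) / (d - x)) < (d - z1) * ((d - y) / (d - x)) :=
            mul_lt_mul_of_pos_right (by linarith) hs3
          linarith
        · rw [pwl_eq4 hcx hxd s3]
          exact lt_of_lt_of_le b1.2 s3
      · rw [pwl_eq4 hcx hxd r3, pwl_eq4 hcx hxd (le_trans r3 (le_of_lt h))]
        exact h

lemma pwl_inv {c d x y : ℚ} (hcx : c < x) (hxd : x < d) (hcy : c < y) (hyd : y < d) :
    ∀ z, pwl c d y x (pwl c d x y z) = z := by
  intro z
  have hxc : x - c ≠ 0 := by linarith
  have hyc : y - c ≠ 0 := by linarith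
  have hdx : d - x ≠ 0 := by linarith
  have hdy : d - y ≠ 0 := by linarith
  rcases le_or_gt z c with r1 | r1
  · rw [pwl_eq1 r1, pwl_eq1 r1]
  · rcases le_or_gt z x with r2 | r2
    · have b := pwl_bound2 (d := d) (y := y) hcx hcy r1 r2
      rw [pwl_eq2 r1 r2] at b ⊢
      rw [pwl_eq2 b.1 b.2]
      field_simp
      ring
    · rcases lt_or_ge z d with r3 | r3
      · have b := pwl_bound3 hcx hxd hyd r2 r3
        rw [pwl_eq3 hcx r2 r3] at b ⊢
        rw [pwl_eq3 hcy b.1 b.2]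
        field_simp
        ring
      · rw [pwl_eq4 hcx hxd r3, pwl_eq4 hcy hyd r3]

/-- The key order isomorphism: fixes everything outside `(c,d)`, maps `x` to `y`. -/
lemma pwl_orderIso {c d x y : ℚ} (hcx : c < x) (hxd : x < d) (hcy : c < y) (hyd : y < d) :
    ∃ π : ℚ ≃o ℚ, π x = y ∧ ∀ z, z ≤ c ∨ d ≤ z → π z = z := by
  have hmono := pwl_strictMono hcx hxd hcy hyd
  have hsurj : Function.Surjective (pwl c d x y) := fun w =>
    ⟨pwl c d y x w, pwl_inv hcy hyd hcx hxd w⟩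
  refine ⟨StrictMono.orderIsoOfSurjective _ hmono hsurj, ?_, ?_⟩
  · show pwl c d x y x = y
    rw [pwl_eq2 hcx le_rfl, mul_comm, div_mul_cancel₀ _ (show x - c ≠ 0 by linarith)]
    ring
  · intro z hz
    show pwl c d x y z = z
    rcases hz with hz | hz
    · exact pwl_eq1 hz
    · exact pwl_eq4 hcx hxd hz

/-- Over ordered atoms, every infinite finitely supported subset of `ℚ` contains an
open interval; in particular it contains a strictly increasing infinite sequence. -/
theorem infinite_finitelySupported_contains_interval (A : Set ℚ) (hA : A.Infinite)
    (hsupp : ∃ S : Finset ℚ, ∀ π : ℚ ≃o ℚ, (∀ s ∈ S, π s = s) → ⇑π '' A = A) :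
    (∃ a b : ℚ, a < b ∧ Set.Ioo a b ⊆ A) ∧
    (∃ f : ℕ → ℚ, StrictMono f ∧ ∀ n, f n ∈ A) := by
  obtain ⟨S, hS⟩ := hsupp
  obtain ⟨a, haA, haS⟩ := (hA.diff S.finite_toSet).nonempty
  have haS' : a ∉ S := by simpa using haS
  have hc : ∃ c, c < a ∧ ∀ s ∈ S, s < a → s ≤ c := by
    by_cases h : (S.filter (fun s => s < a)).Nonempty
    · refine ⟨(S.filter (fun s => s < a)).max' h, ?_, ?_⟩
      · have := (S.filter (fun s => s < a)).max'_mem h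
        simp only [Finset.mem_filter] at this
        exact this.2
      · intro s hs hsa
        exact Finset.le_max' (S.filter (fun s => s < a)) s (Finset.mem_filter.2 ⟨hs, hsa⟩)
    · refine ⟨a - 1, by linarith, ?_⟩
      intro s hs hsa
      exact absurd ⟨s, Finset.mem_filter.2 ⟨hs, hsa⟩⟩ h
  have hd : ∃ d, a < d ∧ ∀ s ∈ S, a < s → d ≤ s := by
    by_cases h : (S.filter (fun s => a < s)).Nonempty
    · refine ⟨(S.filter (fun s => a < s)).min' h, ?_, ?_⟩
      · have := (S.filter (fun s => a < s)).min'_mem h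
        simp only [Finset.mem_filter] at this
        exact this.2
      · intro s hs hsa
        exact Finset.min'_le (S.filter (fun s => a < s)) s (Finset.mem_filter.2 ⟨hs, hsa⟩)
    · refine ⟨a + 1, by linarith, ?_⟩
      intro s hs hsa
      exact absurd ⟨s, Finset.mem_filter.2 ⟨hs, hsa⟩⟩ h
  obtain ⟨c, hca, hcS⟩ := hc
  obtain ⟨d, had, hdS⟩ := hd
  have hIoo : Set.Ioo c d ⊆ A := by
    intro y hy
    obtain ⟨hcy, hyd⟩ := hy
    by_cases hya : y = a
    · rw [hya]; exact haA
    · obtain ⟨π, hπx, hπfix⟩ := pwl_orderIso hca had hcy hyd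
      have hfixS : ∀ s ∈ S, π s = s := by
        intro s hs
        apply hπfix
        rcases lt_trichotomy s a with h | h | h
        · exact Or.inl (hcS s hs h)
        · exact absurd (h ▸ hs) haS'
        · exact Or.inr (hdS s hs h)
      rw [← hS π hfixS]
      exact ⟨a, haA, hπx⟩
  refine ⟨⟨c, d, lt_trans hca had, hIoo⟩, ?_⟩
  refine ⟨fun n => d - (d - c) / (n + 2), ?_, ?_⟩
  · intro n m hnm
    have h1 : (0:ℚ) < d - c := by linarith [lt_trans hca had]
    have h2 : ((n:ℚ) + 2) < ((m:ℚ) + 2) := by exact_mod_cast by omega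
    have h3 : (0:ℚ) < (n:ℚ) + 2 := by positivity
    have := div_lt_div_of_pos_left h1 h3 h2
    dsimp only
    linarith
  · intro n
    apply hIoo
    have h1 : (0:ℚ) < d - c := by linarith [lt_trans hca had]
    have h3 : (0:ℚ) < (n:ℚ) + 2 := by positivity
    have h4 : (1:ℚ) < (n:ℚ) + 2 := by
      have : (0:ℚ) ≤ (n:ℚ) := Nat.cast_nonneg n
      linarith
    constructor
    · have := div_lt_self h1 h4
      dsimp only
      linarith
    · have : (0:ℚ) < (d - c) / ((n:ℚ) + 2) := div_pos h1 h3
      dsimp only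
      linarith
end

section
/- Consider a Kripke-style structure whose states are finite sequences of atoms with no repeated letters (over a countably infinite set 𝔸), with transitions w → wa for each atom a not occurring in w, and where the unique basic predicate holding at a nonempty word is its last letter. Then: (1) every state has at least one successor, and at every successor some basic predicate holds; and (2) on every path, no basic predicate holds more than once. -/
/-- Transition relation of the model whose states are duplicate-free words over the
atoms: `w → w ++ [a]` for any atom `a` not occurring in `w`. -/
def freshStep {A : Type*} (w w' : List A) : Prop :=
  w.Nodup ∧ ∃ a : A, a ∉ w ∧ w' = w ++ [a]

/-- In the Kripke model of duplicate-free words over a countably infinite alphabet,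
with transitions `w → wa` for fresh `a` and the last letter as the unique basic
predicate of a nonempty word: (1) every state has a successor at which some basic
predicate holds, and (2) on every path no basic predicate holds more than once. -/
theorem freshWord_model_properties {A : Type*} [Countable A] [Infinite A] :
    (∀ w : List A, w.Nodup →
      ∃ w' : List A, freshStep w w' ∧ ∃ p : A, w'.getLast? = some p) ∧
    (∀ (n : ℕ) (ρ : ℕ → List A), (∀ i < n, freshStep (ρ i) (ρ (i + 1))) →
      ∀ i j : ℕ, i < j → j ≤ n → ∀ p : A,
        (ρ i).getLast? = some p → (ρ j).getLast? = some p → False) := by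
  constructor
  · intro w hw
    classical
    obtain ⟨a, ha⟩ := (w.toFinset).exists_notMem
    refine ⟨w ++ [a], ⟨hw, a, by simpa using ha, rfl⟩, a, ?_⟩
    simp [List.getLast?_concat]
  · intro n ρ hstep i j hij hjn p hpi hpj
    have hmem : ∀ k, i ≤ k → k ≤ n → p ∈ ρ k := by
      intro k hk
      induction k, hk using Nat.le_induction with
      | base =>
        intro _
        obtain ⟨h, rfl⟩ := List.mem_getLast?_eq_getLast hpi
        exact List.getLast_mem h
      | succ k hk ih =>
        intro hkn
        obtain ⟨_, a, _, heq⟩ := hstep k (lt_of_lt_of_le (Nat.lt_succ_self k) hkn)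
        rw [heq]
        exact List.mem_append_left _ (ih (le_of_lt (lt_of_lt_of_le (Nat.lt_succ_self k) hkn)))
    obtain ⟨j', rfl⟩ : ∃ j', j = j' + 1 := ⟨j - 1, (Nat.succ_pred_eq_of_pos (Nat.zero_lt_of_lt hij)).symm⟩
    obtain ⟨_, a, hna, heq⟩ := hstep j' (lt_of_lt_of_le (Nat.lt_succ_self j') hjn)
    have hpmem : p ∈ ρ j' := hmem j' (Nat.lt_succ_iff.mp hij) (le_of_lt (lt_of_lt_of_le (Nat.lt_succ_self j') hjn))
    rw [heq, List.getLast?_concat] at hpj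
    exact hna (Option.some_injective _ hpj ▸ hpmem)
end

section
/- Define a translation M from LTL formulas in negation normal form to modal μ-calculus formulas by: M(p) = p, M(¬p) = ¬p, M(Xφ) = □M(φ), M(φ∨ψ) = M(φ)∨M(ψ), M(φ∧ψ) = M(φ)∧M(ψ), M(φ U ψ) = μY.(M(ψ) ∨ (M(φ) ∧ □Y)), M(φ R ψ) = νY.(M(ψ) ∧ (M(φ) ∨ □Y)). Then in every Kripke model, if a state x satisfies M(φ), then every infinite path starting from x, viewed as a word model, satisfies the LTL formula φ. -/
/-- LTL formulas in negation normal form over basic predicates `P`. -/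
inductive LTLF (P : Type*) : Type _ where
  | pos (p : P)
  | neg (p : P)
  | next (φ : LTLF P)
  | disj (φ ψ : LTLF P)
  | conj (φ ψ : LTLF P)
  | untl (φ ψ : LTLF P)
  | rels (φ ψ : LTLF P)

/-- Least fixpoint of a set operator (Knaster–Tarski). -/
def lfpSet {S : Type*} (f : Set S → Set S) : Set S := sInf {X | f X ⊆ X}

/-- Greatest fixpoint of a set operator (Knaster–Tarski). -/
def gfpSet {S : Type*} (f : Set S → Set S) : Set S := sSup {X | X ⊆ f X}

/-- The μ-calculus semantics of the translation `M(φ)` of an LTL formula `φ`, over a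
Kripke model with states `S`, transition relation `r` and valuation `val`:
`M(p) = p`, `M(¬p) = ¬p`, `M(Xφ) = □M(φ)`, `M` commutes with `∨` and `∧`,
`M(φ U ψ) = μY.(M(ψ) ∨ (M(φ) ∧ □Y))`, `M(φ R ψ) = νY.(M(ψ) ∧ (M(φ) ∨ □Y))`. -/
def muSem {P S : Type*} (val : S → P → Prop) (r : S → S → Prop) : LTLF P → Set S
  | .pos p => {x | val x p}
  | .neg p => {x | ¬ val x p}
  | .next φ => {x | ∀ y, r x y → y ∈ muSem val r φ}
  | .disj φ ψ => muSem val r φ ∪ muSem val r ψ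
  | .conj φ ψ => muSem val r φ ∩ muSem val r ψ
  | .untl φ ψ =>
      lfpSet (fun Y => muSem val r ψ ∪ (muSem val r φ ∩ {x | ∀ y, r x y → y ∈ Y}))
  | .rels φ ψ =>
      gfpSet (fun Y => muSem val r ψ ∩ (muSem val r φ ∪ {x | ∀ y, r x y → y ∈ Y}))

/-- The standard LTL semantics of a formula on an infinite path `π : ℕ → S`. -/
def pathSat {P S : Type*} (val : S → P → Prop) (π : ℕ → S) : LTLF P → Prop
  | .pos p => val (π 0) p
  | .neg p => ¬ val (π 0) p
  | .next φ => pathSat val (fun n => π (n + 1)) φ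
  | .disj φ ψ => pathSat val π φ ∨ pathSat val π ψ
  | .conj φ ψ => pathSat val π φ ∧ pathSat val π ψ
  | .untl φ ψ => ∃ j : ℕ, pathSat val (fun n => π (j + n)) ψ ∧
      ∀ i < j, pathSat val (fun n => π (i + n)) φ
  | .rels φ ψ => ∀ j : ℕ, pathSat val (fun n => π (j + n)) ψ ∨
      ∃ i < j, pathSat val (fun n => π (i + n)) φ

/-- If a state `x` of a Kripke model satisfies the μ-calculus translation `M(φ)` of
an LTL formula `φ` in negation normal form, then every infinite path of the model
starting from `x` satisfies `φ`. -/
theorem muSem_sound_for_paths {P S : Type*} (val : S → P → Prop) (r : S → S → Prop)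
    (φ : LTLF P) (x : S) (hx : x ∈ muSem val r φ)
    (π : ℕ → S) (h0 : π 0 = x) (hπ : ∀ n : ℕ, r (π n) (π (n + 1))) :
    pathSat val π φ := by
  induction φ generalizing x π with
  | pos p => subst h0; exact hx
  | neg p => subst h0; exact hx
  | next φ ih =>
      exact ih (π 1) (hx (π 1) (h0 ▸ hπ 0)) (fun n => π (n + 1)) rfl (fun n => hπ (n + 1))
  | disj φ ψ ihφ ihψ =>
      cases hx with
      | inl h => exact Or.inl (ihφ x h π h0 hπ)
      | inr h => exact Or.inr (ihψ x h π h0 hπ)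
  | conj φ ψ ihφ ihψ => exact ⟨ihφ x hx.1 π h0 hπ, ihψ x hx.2 π h0 hπ⟩
  | untl φ ψ ihφ ihψ =>
      set X : Set S := {z | ∀ π' : ℕ → S, π' 0 = z → (∀ n, r (π' n) (π' (n + 1))) →
        ∃ j, pathSat val (fun n => π' (j + n)) ψ ∧
          ∀ i < j, pathSat val (fun n => π' (i + n)) φ} with hXdef
      have hX : (muSem val r ψ ∪ (muSem val r φ ∩ {z | ∀ y, r z y → y ∈ X})) ⊆ X := by
        rintro z (hz | ⟨hzφ, hzbox⟩) π' h0' hπ'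
        · exact ⟨0, by simpa using ihψ z hz π' h0' hπ',
            fun i hi => absurd hi (Nat.not_lt_zero i)⟩
        · obtain ⟨j, hj1, hj2⟩ := hzbox (π' 1) (h0' ▸ hπ' 0) (fun n => π' (1 + n)) (by simp)
            (fun n => by simpa [Nat.add_assoc] using hπ' (1 + n))
          refine ⟨j + 1, ?_, ?_⟩
          · have he : (fun n => π' (j + 1 + n)) = (fun n => π' (1 + (j + n))) := by
              funext n; congr 1; omega
            rw [he]; exact hj1
          · intro i hi
            rcases Nat.eq_zero_or_pos i with rfl | hpos
            · simpa using ihφ z hzφ π' h0' hπ'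
            · have h := hj2 (i - 1) (by omega)
              have he : (fun n => π' (i + n)) = (fun n => π' (1 + (i - 1 + n))) := by
                funext n; congr 1; omega
              rw [he]; exact h
      exact hx X hX π h0 hπ
  | rels φ ψ ihφ ihψ =>
      obtain ⟨Y, hY, hxY⟩ : ∃ t ∈ {X | X ⊆ muSem val r ψ ∩ (muSem val r φ ∪ {z | ∀ y, r z y → y ∈ X})}, x ∈ t := hx
      have key : ∀ j : ℕ, (∃ i < j, pathSat val (fun n => π (i + n)) φ) ∨ π j ∈ Y := by
        intro j
        induction j with
        | zero => exact Or.inr (h0 ▸ hxY)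
        | succ j ihj =>
          rcases ihj with ⟨i, hi, h⟩ | hYj
          · exact Or.inl ⟨i, by omega, h⟩
          · rcases (hY hYj).2 with hφ | hbox
            · exact Or.inl ⟨j, Nat.lt_succ_self j, ihφ (π j) hφ (fun n => π (j + n)) (by simp)
                (fun n => by simpa [Nat.add_assoc] using hπ (j + n))⟩
            · exact Or.inr (hbox (π (j + 1)) (hπ j))
      intro j
      rcases key j with ⟨i, hi, h⟩ | hYj
      · exact Or.inr ⟨i, hi, h⟩
      · exact Or.inl (ihψ (π j) (hY hYj).1 (fun n => π (j + n)) (by simp)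
          (fun n => by simpa [Nat.add_assoc] using hπ (j + n)))
end
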